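/- Fix integers n, k, t, w with k ≥ t, n ≥ k, 1 ≤ w ≤ k, and positive integers k_1, …, k_w with k_1 + ⋯ + k_w = k and each k_i ≤ n. Let I_1, …, I_w be pairwise disjoint sets each of size n, and let 𝒜 = {F ⊆ I_1 ∪ ⋯ ∪ I_w : |F ∩ I_i| = k_i for every i}. Then 𝒜 is a k-uniform (r, t)-spread family for r = min_i (n/k_i). In particular, binom([n],k) (the case w = 1) is (n/k, t)-spread, and the family of graphs of functions from [k] to [n] (the case w = k, each k_i = 1) is (n, t)-spread. -/

import Mathlib

open Finset
open scoped Classical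

variable {γ : Type*}

/-- `F(B) = {F \ B : F ∈ F, B ⊆ F}`. -/
def famRestrict [DecidableEq γ] (F : Finset (Finset γ)) (B : Finset γ) : Finset (Finset γ) :=
  (F.filter fun A => B ⊆ A).image fun A => A \ B

/-- `F[ℬ] = {F ∈ F : ∃ B ∈ ℬ, B ⊆ F}`. -/
def famAbove [DecidableEq γ] (F ℬ : Finset (Finset γ)) : Finset (Finset γ) :=
  F.filter fun A => ∃ B ∈ ℬ, B ⊆ A

/-- The shadow `∂_h F`. -/
def famShadow [DecidableEq γ] (F : Finset (Finset γ)) (h : ℕ) : Finset (Finset γ) :=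
  F.biUnion fun A => Finset.powersetCard h A

/-- The shadow `∂_{≤h} F`. -/
def famShadowLe [DecidableEq γ] (F : Finset (Finset γ)) (h : ℕ) : Finset (Finset γ) :=
  (Finset.range (h + 1)).biUnion fun j => famShadow F j

/-- `P` is a sunflower with `s` petals and core `K`: `P` consists of `s` sets, `K` is
the intersection of all members of `P`, and any two distinct members intersect in `K`. -/
def IsSunflower [DecidableEq γ] (P : Finset (Finset γ)) (s : ℕ) (K : Finset γ) : Prop :=
  P.card = s ∧ ∃ hP : P.Nonempty, K = P.inf' hP id ∧
    ∀ A ∈ P, ∀ B ∈ P, A ≠ B → A ∩ B = K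

/-- `F` contains no sunflower with `s` petals (with arbitrary core). -/
def SunflowerFree [DecidableEq γ] (F : Finset (Finset γ)) (s : ℕ) : Prop :=
  ∀ P ⊆ F, ∀ K : Finset γ, ¬ IsSunflower P s K

/-- `φ(s,t)`: the maximal size of a family of `t`-element sets with no sunflower
with `s` petals. -/
noncomputable def phi (s t : ℕ) : ℕ :=
  sSup {m : ℕ | ∃ F : Finset (Finset ℕ),
    (∀ A ∈ F, A.card = t) ∧ SunflowerFree F s ∧ F.card = m}

/-- `G` is `R`-spread: `|G(X)| ≤ R^{-|X|} |G|` for every `X`. -/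
def IsSpread [DecidableEq γ] (R : ℝ) (G : Finset (Finset γ)) : Prop :=
  ∀ X : Finset γ, ((famRestrict G X).card : ℝ) ≤ R ^ (-(X.card : ℤ)) * G.card

/-- `F` is `k`-uniform. -/
def IsUniform (F : Finset (Finset γ)) (k : ℕ) : Prop := ∀ A ∈ F, A.card = k

/-- `𝒜` is `(r,t)`-spread: `𝒜(T)` is `r`-spread for every `T ∈ ∂_{≤t} 𝒜`. -/
def IsRTSpread [DecidableEq γ] (𝒜 : Finset (Finset γ)) (r : ℝ) (t : ℕ) : Prop :=
  ∀ T ∈ famShadowLe 𝒜 t, IsSpread r (famRestrict 𝒜 T)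

/-- `F` is `τ`-homogeneous with respect to `𝒜`:
`|F(X)| ⬝ |𝒜| ≤ τ^{|X|} ⬝ |F| ⬝ |𝒜(X)|` for every `X`. -/
def IsHomog [DecidableEq γ] (τ : ℝ) (F 𝒜 : Finset (Finset γ)) : Prop :=
  ∀ X : Finset γ,
    ((famRestrict F X).card : ℝ) * 𝒜.card ≤ τ ^ X.card * F.card * (famRestrict 𝒜 X).card

section Aux

variable {γ : Type*}

open Finset in
lemma card_famRestrict [DecidableEq γ] (F : Finset (Finset γ)) (B : Finset γ) :
    (famRestrict F B).card = (F.filter fun A => B ⊆ A).card := by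
  apply Finset.card_image_of_injOn
  intro A hA A' hA' h
  simp only [coe_filter, Set.mem_setOf_eq] at hA hA'
  have h2 := congrArg (· ∪ B) h
  simpa [Finset.sdiff_union_of_subset hA.2, Finset.sdiff_union_of_subset hA'.2] using h2

open Finset in
lemma famRestrict_famRestrict [DecidableEq γ] (F : Finset (Finset γ)) (T X : Finset γ)
    (h : Disjoint X T) :
    famRestrict (famRestrict F T) X = famRestrict F (T ∪ X) := by
  ext s
  simp only [famRestrict, mem_image, mem_filter]
  constructor
  · rintro ⟨u, ⟨⟨A, ⟨hA, hTA⟩, rfl⟩, hXu⟩, rfl⟩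
    refine ⟨A, ⟨hA, union_subset hTA (fun x hx => (mem_sdiff.1 (hXu hx)).1)⟩, ?_⟩
    ext z; simp only [mem_sdiff, mem_union]; tauto
  · rintro ⟨A, ⟨hA, hsub⟩, rfl⟩
    refine ⟨A \ T, ⟨⟨A, ⟨hA, (union_subset_iff.1 hsub).1⟩, rfl⟩, ?_⟩, ?_⟩
    · intro x hx
      exact mem_sdiff.2 ⟨(union_subset_iff.1 hsub).2 hx, fun hxT => Finset.disjoint_left.1 h hx hxT⟩
    · ext z; simp only [mem_sdiff, mem_union]; tauto

open Finset in
lemma step_count {α : Type*} [DecidableEq α] (n : ℕ) {w : ℕ} (ks : Fin w → ℕ)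
    (I : Fin w → Finset α) (hcard : ∀ i, (I i).card = n)
    (hdisj : ∀ i j, i ≠ j → Disjoint (I i) (I j))
    (𝒜 : Finset (Finset α))
    (h𝒜 : 𝒜 = (Finset.univ.biUnion I).powerset.filter fun A => ∀ i, (A ∩ I i).card = ks i)
    (i : Fin w) (a : α) (ha : a ∈ I i) (Y : Finset α) (haY : a ∉ Y) :
    (𝒜.filter fun A => insert a Y ⊆ A).card * n ≤ ks i * (𝒜.filter fun A => Y ⊆ A).card := by
  have hmem : ∀ A ∈ 𝒜, A ⊆ Finset.univ.biUnion I ∧ ∀ j, (A ∩ I j).card = ks j := by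
    intro A hA
    rw [h𝒜, mem_filter, mem_powerset] at hA
    exact hA
  set s := (Y ∩ I i).card with hs_def
  by_cases hs : ks i ≤ s
  · -- then no A contains insert a Y
    have hempty : (𝒜.filter fun A => insert a Y ⊆ A) = ∅ := by
      rw [filter_eq_empty_iff]
      intro A hA hsub
      have h1 : insert a (Y ∩ I i) ⊆ A ∩ I i := by
        intro z hz
        rcases mem_insert.1 hz with hz' | hz'
        · exact hz' ▸ mem_inter.2 ⟨hsub (mem_insert_self a Y), ha⟩
        · exact mem_inter.2 ⟨hsub (mem_insert_of_mem (mem_inter.1 hz').1), (mem_inter.1 hz').2⟩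
      have h2 : s + 1 ≤ (A ∩ I i).card := by
        have := card_le_card h1
        rwa [card_insert_of_notMem (fun h => haY (mem_inter.1 h).1)] at this
      rw [(hmem A hA).2 i] at h2
      omega
    rw [hempty]; simp
  · push_neg at hs
    have hswapI : ∀ y ∈ I i, ∀ j, ∀ x : α, (Equiv.swap a y) x ∈ I j ↔ x ∈ I j := by
      intro y hy j x
      have hkey : ∀ j, (a ∈ I j ↔ y ∈ I j) := by
        intro j
        by_cases hji : j = i
        · subst hji; simp [ha, hy]
        · constructor
          · intro h; exact absurd h (Finset.disjoint_left.1 (hdisj i j (fun h' => hji h'.symm)) ha)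
          · intro h; exact absurd h (Finset.disjoint_left.1 (hdisj i j (fun h' => hji h'.symm)) hy)
      rcases eq_or_ne x a with rfl | hxa
      · rw [Equiv.swap_apply_left]; exact (hkey j).symm
      rcases eq_or_ne x y with rfl | hxy
      · rw [Equiv.swap_apply_right]; exact hkey j
      · rw [Equiv.swap_apply_of_ne_of_ne hxa hxy]
    have hswapA : ∀ y ∈ I i, ∀ B ∈ 𝒜, B.image (Equiv.swap a y) ∈ 𝒜 := by
      intro y hy B hB
      obtain ⟨hBsub, hBcard⟩ := hmem B hB
      rw [h𝒜, mem_filter, mem_powerset]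
      constructor
      · intro z hz
        obtain ⟨b, hb, rfl⟩ := mem_image.1 hz
        obtain ⟨j, _, hbj⟩ := mem_biUnion.1 (hBsub hb)
        exact mem_biUnion.2 ⟨j, mem_univ j, (hswapI y hy j b).2 hbj⟩
      · intro j
        have himg : B.image (Equiv.swap a y) ∩ I j = (B ∩ I j).image (Equiv.swap a y) := by
          ext z
          simp only [mem_inter, mem_image]
          constructor
          · rintro ⟨⟨b, hb, rfl⟩, hzj⟩
            exact ⟨b, ⟨hb, (hswapI y hy j b).1 hzj⟩, rfl⟩
          · rintro ⟨b, ⟨hb1, hb2⟩, rfl⟩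
            exact ⟨⟨b, hb1, rfl⟩, (hswapI y hy j b).2 hb2⟩
        rw [himg, card_image_of_injective _ (Equiv.injective _)]
        exact hBcard j
    have key : (((𝒜.filter fun A => insert a Y ⊆ A)) ×ˢ (I i \ Y)).card ≤
        ((𝒜.filter fun A => Y ⊆ A).sigma fun A => (A ∩ I i) \ Y).card := by
      apply Finset.card_le_card_of_injOn
        (fun p => (⟨p.1.image (Equiv.swap a p.2), p.2⟩ : Σ _ : Finset α, α))
      · rintro ⟨B, y⟩ hp
        simp only [mem_coe, mem_product, mem_filter, mem_sdiff] at hp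
        obtain ⟨⟨hB𝒜, hBsub⟩, hyI, hyY⟩ := hp
        simp only [mem_coe, mem_sigma, mem_filter, mem_sdiff, mem_inter]
        refine ⟨⟨hswapA y hyI B hB𝒜, ?_⟩, ⟨?_, hyI⟩, hyY⟩
        · intro z hz
          have hza : z ≠ a := fun h => haY (h ▸ hz)
          have hzy : z ≠ y := fun h => hyY (h ▸ hz)
          exact mem_image.2 ⟨z, hBsub (mem_insert_of_mem hz),
            Equiv.swap_apply_of_ne_of_ne hza hzy⟩
        · exact mem_image.2 ⟨a, hBsub (mem_insert_self a Y), Equiv.swap_apply_left a y⟩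
      · rintro ⟨B, y⟩ hp ⟨B', y'⟩ hp' heq
        simp only [Sigma.mk.inj_iff, heq_eq_eq] at heq
        have hy : y = y' := heq.2
        subst hy
        have hB : B = B' := Finset.image_injective (Equiv.injective _) heq.1
        rw [hB]
    -- compute both cardinalities
    have hIY : (I i \ Y).card = n - s := by
      have h1 : I i \ Y = I i \ (Y ∩ I i) := by
        ext z; simp only [mem_sdiff, mem_inter]; tauto
      rw [h1, card_sdiff_of_subset inter_subset_right, hcard i]
    have hsum : ((𝒜.filter fun A => Y ⊆ A).sigma fun A => (A ∩ I i) \ Y).card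
        = (𝒜.filter fun A => Y ⊆ A).card * (ks i - s) := by
      rw [Finset.card_sigma]
      rw [Finset.sum_congr rfl (fun A hA => ?_), Finset.sum_const, smul_eq_mul]
      have hA' := mem_filter.1 hA
      have h1 : (A ∩ I i) \ Y = (A ∩ I i) \ (Y ∩ I i) := by
        ext z; simp only [mem_sdiff, mem_inter]; tauto
      rw [h1, card_sdiff_of_subset (inter_subset_inter hA'.2 Subset.rfl),
        (hmem A hA'.1).2 i]
    rw [Finset.card_product, hIY, hsum] at key
    have hNN : (𝒜.filter fun A => insert a Y ⊆ A).card ≤ (𝒜.filter fun A => Y ⊆ A).card := by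
      apply card_le_card
      intro A hA
      have hA' := mem_filter.1 hA
      exact mem_filter.2 ⟨hA'.1, (subset_insert a Y).trans hA'.2⟩
    have hsn : s ≤ n := by
      rw [← hcard i]; exact card_le_card inter_subset_right
    set N' := (𝒜.filter fun A => insert a Y ⊆ A).card
    set N := (𝒜.filter fun A => Y ⊆ A).card
    calc N' * n = N' * ((n - s) + s) := by rw [Nat.sub_add_cancel hsn]
      _ = N' * (n - s) + N' * s := Nat.mul_add _ _ _
      _ ≤ N * (ks i - s) + N * s := Nat.add_le_add key (Nat.mul_le_mul_right s hNN)
      _ = N * ((ks i - s) + s) := (Nat.mul_add _ _ _).symm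
      _ = N * ks i := by rw [Nat.sub_add_cancel (le_of_lt hs)]
      _ = ks i * N := Nat.mul_comm _ _

end Aux

/-- Proposition 4.8 (product families are `(r,t)`-spread). -/
theorem product_family_spread {α : Type*} [DecidableEq α] (n k t w : ℕ)
    (hkt : t ≤ k) (hnk : k ≤ n) (hw1 : 1 ≤ w) (hwk : w ≤ k)
    (ks : Fin w → ℕ) (hkspos : ∀ i, 0 < ks i) (hksn : ∀ i, ks i ≤ n)
    (hsum : ∑ i, ks i = k)
    (I : Fin w → Finset α) (hcard : ∀ i, (I i).card = n)
    (hdisj : ∀ i j, i ≠ j → Disjoint (I i) (I j))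
    (𝒜 : Finset (Finset α))
    (h𝒜 : 𝒜 = (Finset.univ.biUnion I).powerset.filter fun A => ∀ i, (A ∩ I i).card = ks i)
    (r : ℝ) (hr : r = sInf {x : ℝ | ∃ i, x = (n : ℝ) / (ks i : ℝ)}) :
    IsUniform 𝒜 k ∧ IsRTSpread 𝒜 r t := by
  have hmem : ∀ A ∈ 𝒜, A ⊆ Finset.univ.biUnion I ∧ ∀ j, (A ∩ I j).card = ks j := by
    intro A hA
    rw [h𝒜, mem_filter, mem_powerset] at hA
    exact hA
  have hn0 : 0 < n := lt_of_lt_of_le (lt_of_lt_of_le hw1 hwk) hnk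
  -- facts about r
  have hsetr : {x : ℝ | ∃ i, x = (n : ℝ) / (ks i : ℝ)}
      = Set.range (fun i : Fin w => (n : ℝ) / (ks i : ℝ)) := by
    ext x; simp [Set.mem_range, eq_comm]
  have hfin : ({x : ℝ | ∃ i, x = (n : ℝ) / (ks i : ℝ)}).Finite := by
    rw [hsetr]; exact Set.finite_range _
  have hne : ({x : ℝ | ∃ i, x = (n : ℝ) / (ks i : ℝ)}).Nonempty :=
    ⟨(n : ℝ) / (ks ⟨0, hw1⟩ : ℝ), ⟨⟨0, hw1⟩, rfl⟩⟩
  have hrmem : r ∈ {x : ℝ | ∃ i, x = (n : ℝ) / (ks i : ℝ)} := hr ▸ hne.csInf_mem hfin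
  have hr0 : 0 < r := by
    obtain ⟨i0, hi0⟩ := hrmem
    rw [hi0]
    exact div_pos (by exact_mod_cast hn0) (by exact_mod_cast hkspos i0)
  have hrle : ∀ i, r ≤ (n : ℝ) / (ks i : ℝ) := by
    intro i
    rw [hr]
    exact csInf_le hfin.bddBelow ⟨i, rfl⟩
  -- uniformity
  have huni : IsUniform 𝒜 k := by
    intro A hA
    obtain ⟨hsub, hcards⟩ := hmem A hA
    have hAeq : A = Finset.univ.biUnion (fun i => A ∩ I i) := by
      ext x
      simp only [mem_biUnion, mem_inter, mem_univ, true_and]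
      constructor
      · intro hx
        obtain ⟨j, _, hj⟩ := mem_biUnion.1 (hsub hx)
        exact ⟨j, hx, hj⟩
      · rintro ⟨j, hx, _⟩; exact hx
    rw [hAeq, card_biUnion]
    · simp only [hcards]; exact hsum
    · intro i _ j _ hij
      exact (hdisj i j hij).mono inter_subset_right inter_subset_right
  refine ⟨huni, ?_⟩
  -- one-step bound in ℝ
  have hstepR : ∀ (Y : Finset α) (a : α), a ∉ Y →
      ((𝒜.filter fun A => insert a Y ⊆ A).card : ℝ)
        ≤ r⁻¹ * (𝒜.filter fun A => Y ⊆ A).card := by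
    intro Y a haY
    by_cases hab : a ∈ Finset.univ.biUnion I
    · obtain ⟨i, _, hai⟩ := mem_biUnion.1 hab
      have h1 := step_count n ks I hcard hdisj 𝒜 h𝒜 i a hai Y haY
      have hnR : (0:ℝ) < n := by exact_mod_cast hn0
      have h2 : ((𝒜.filter fun A => insert a Y ⊆ A).card : ℝ)
          ≤ ((ks i : ℝ) / n) * (𝒜.filter fun A => Y ⊆ A).card := by
        rw [div_mul_eq_mul_div, le_div_iff₀ hnR]
        exact_mod_cast h1
      refine h2.trans (mul_le_mul_of_nonneg_right ?_ (Nat.cast_nonneg _))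
      have h3 := inv_anti₀ hr0 (hrle i)
      rwa [inv_div] at h3
    · have hempty : (𝒜.filter fun A => insert a Y ⊆ A) = ∅ := by
        rw [filter_eq_empty_iff]
        intro A hA hsubA
        exact hab ((hmem A hA).1 (hsubA (mem_insert_self a Y)))
      rw [hempty]
      simp only [card_empty, Nat.cast_zero]
      positivity
  -- iterated bound
  have hmain : ∀ (X Y : Finset α), Disjoint X Y →
      ((𝒜.filter fun A => Y ∪ X ⊆ A).card : ℝ)
        ≤ r⁻¹ ^ X.card * (𝒜.filter fun A => Y ⊆ A).card := by
    intro X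
    induction X using Finset.induction_on with
    | empty => intro Y _; simp
    | @insert a X' haX' ih =>
      intro Y hdXY
      have haY : a ∉ Y := Finset.disjoint_left.1 hdXY (mem_insert_self a X')
      have hX'Y : Disjoint X' Y := hdXY.mono_left (subset_insert a X')
      have hrw : Y ∪ insert a X' = insert a (Y ∪ X') := by
        ext z; simp only [mem_union, mem_insert]; tauto
      have haYX' : a ∉ Y ∪ X' := by
        simp only [mem_union]; push_neg; exact ⟨haY, haX'⟩
      rw [hrw, card_insert_of_notMem haX']
      calc ((𝒜.filter fun A => insert a (Y ∪ X') ⊆ A).card : ℝ)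
          ≤ r⁻¹ * (𝒜.filter fun A => Y ∪ X' ⊆ A).card := hstepR _ a haYX'
        _ ≤ r⁻¹ * (r⁻¹ ^ X'.card * (𝒜.filter fun A => Y ⊆ A).card) :=
            mul_le_mul_of_nonneg_left (ih Y hX'Y) (inv_nonneg.2 hr0.le)
        _ = r⁻¹ ^ (X'.card + 1) * (𝒜.filter fun A => Y ⊆ A).card := by ring
  -- assemble spreadness
  intro T _ X
  have hzpow : r ^ (-(X.card : ℤ)) = r⁻¹ ^ X.card := by
    rw [zpow_neg, ← inv_zpow, zpow_natCast]
  by_cases hXT : Disjoint X T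
  · rw [famRestrict_famRestrict 𝒜 T X hXT, card_famRestrict, card_famRestrict, hzpow]
    exact hmain X T hXT
  · have hempty : famRestrict (famRestrict 𝒜 T) X = ∅ := by
      have hf : ((famRestrict 𝒜 T).filter fun u => X ⊆ u) = ∅ := by
        rw [filter_eq_empty_iff]
        intro u hu hXu
        obtain ⟨A, _, rfl⟩ := mem_image.1 hu
        exact hXT (Finset.disjoint_left.2 fun x hx => (mem_sdiff.1 (hXu hx)).2)
      show ((famRestrict 𝒜 T).filter fun u => X ⊆ u).image _ = ∅
      rw [hf, image_empty]
    rw [hempty]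
    simp only [card_empty, Nat.cast_zero]
    positivity
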